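/- Let φ be twice differentiable and strictly convex on (0,∞) with φ′ > 0 there, and let A > 0. For w > v₁ > v₂ > 0 with φ(w) < A, the quantity D(v₁,v₂,w) = φ′(v₂)·{φ′(w)·[A − L_{v₁}(w)] − φ′(v₁)·[A − φ(w)]} + φ′(v₁)·{φ′(w)·L_{v₂}(w) − φ′(v₂)·φ(w)} is strictly positive, provided L_{v₂} > 0 on (v₂,∞) and φ(v) > 0 for v > 0. -/

import Mathlib

/-- Generic helper: if `f` has positive derivative on `(a,b) ⊆ (0,∞)`, then `f a < f b`. -/
lemma mono_aux (f f' : ℝ → ℝ) (a b : ℝ) (ha : 0 < a) (hab : a < b)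
    (hd : ∀ v > 0, HasDerivAt f (f' v) v)
    (hpos : ∀ v, a < v → v < b → 0 < f' v) : f a < f b := by
  have hmono : StrictMonoOn f (Set.Icc a b) := by
    apply strictMonoOn_of_deriv_pos (convex_Icc a b)
    · intro x hx
      exact ((hd x (lt_of_lt_of_le ha hx.1)).continuousAt).continuousWithinAt
    · intro x hx
      rw [interior_Icc] at hx
      have hx0 : 0 < x := lt_trans ha hx.1
      rw [(hd x hx0).deriv]
      exact hpos x hx.1 hx.2
  exact hmono (Set.left_mem_Icc.2 hab.le) (Set.right_mem_Icc.2 hab.le) hab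

/-- Positivity of the denominator `D(v₁,v₂,w)` in the implicit differentiation of the
η-continuity equation, for `w > v₁ > v₂ > 0` with `φ(w) < A`. -/
theorem stmt4 (φ φ' φ'' : ℝ → ℝ)
    (hd : ∀ v > 0, HasDerivAt φ (φ' v) v)
    (hd' : ∀ v > 0, HasDerivAt φ' (φ'' v) v)
    (hφ : ∀ v > 0, 0 < φ v) (hφ' : ∀ v > 0, 0 < φ' v) (hφ'' : ∀ v > 0, 0 < φ'' v)
    (A : ℝ) (hA : 0 < A)
    (L : ℝ → ℝ → ℝ) (hL : ∀ V v, L V v = φ V + φ' V * (v - V))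
    (v₁ v₂ w : ℝ) (h2 : 0 < v₂) (h12 : v₂ < v₁) (h1w : v₁ < w) (hwA : φ w < A)
    (hLpos : ∀ u > v₂, 0 < L v₂ u) :
    0 < φ' v₂ * (φ' w * (A - L v₁ w) - φ' v₁ * (A - φ w))
        + φ' v₁ * (φ' w * L v₂ w - φ' v₂ * φ w) := by
  have h1 : 0 < v₁ := lt_trans h2 h12
  have hw : 0 < w := lt_trans h1 h1w
  -- φ' is strictly increasing on (0,∞)
  have hmono : ∀ x y : ℝ, 0 < x → x < y → φ' x < φ' y := fun x y hx hxy =>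
    mono_aux φ' φ'' x y hx hxy hd' (fun v hv _ => hφ'' v (lt_trans hx hv))
  have hab : φ' v₂ < φ' v₁ := hmono v₂ v₁ h2 h12
  have hbc : φ' v₁ < φ' w := hmono v₁ w h1 h1w
  have ha : 0 < φ' v₂ := hφ' v₂ h2
  -- tangent line at v₁ strictly below φ at w
  have htan : L v₁ w < φ w := by
    have := mono_aux (fun u => φ u - φ v₁ - φ' v₁ * (u - v₁)) (fun u => φ' u - φ' v₁)
      v₁ w h1 h1w
      (fun v hv => by
        exact (((hd v hv).sub_const (φ v₁)).sub
          (((hasDerivAt_id v).sub_const v₁).const_mul (φ' v₁))).congr_deriv (by ring))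
      (fun v hv hvw => sub_pos.2 (hmono v₁ v h1 hv))
    simp only [sub_self, mul_zero, sub_zero] at this
    rw [hL]; linarith
  -- key: φ'(w) * L v₂ w > φ'(v₂) * φ w
  have hkey : φ' v₂ * φ w < φ' w * L v₂ w := by
    have := mono_aux (fun u => φ' u * (φ v₂ + φ' v₂ * (u - v₂)) - φ' v₂ * φ u)
      (fun u => φ'' u * (φ v₂ + φ' v₂ * (u - v₂)) + φ' u * φ' v₂ - φ' v₂ * φ' u)
      v₂ w h2 (lt_trans h12 h1w)
      (fun v hv => by
        exact (((hd' v hv).mul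
          ((((hasDerivAt_id v).sub_const v₂).const_mul (φ' v₂)).const_add (φ v₂))).sub
          ((hd v hv).const_mul (φ' v₂))).congr_deriv (by simp only [id]; ring))
      ?_
    · simp only [sub_self, mul_zero, add_zero] at this
      rw [hL]
      nlinarith [this]
    · intro v hv hvw
      have hL2 : 0 < φ v₂ + φ' v₂ * (v - v₂) := by
        have := hLpos v hv; rw [hL] at this; exact this
      have hv0 := hφ'' v (lt_trans h2 hv)
      show 0 < φ'' v * (φ v₂ + φ' v₂ * (v - v₂)) + φ' v * φ' v₂ - φ' v₂ * φ' v
      nlinarith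
  nlinarith [mul_pos ha (mul_pos (sub_pos.2 hbc) (sub_pos.2 hwA)),
    mul_pos (mul_pos ha (lt_trans ha (lt_trans hab hbc))) (sub_pos.2 htan),
    mul_pos (lt_trans ha hab) (sub_pos.2 hkey)]
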